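/- arXiv:0706.2404 — 6 statements merged into one kernel-verified Lean document; each statement's English description precedes it below -/
import Mathlib

section
/- Let P₀, ..., P_ℓ be commuting endomorphisms of V with a decomposition id_V = Σ_i Q_i P^i as above, and let P = P₀⋯P_ℓ. Then for any f ∈ V, the range condition holds: f is in the range of P if and only if f is in the range of P_i for every i = 0, ..., ℓ. In particular range(P) = ∩_{i=0}^ℓ range(P_i). -/
open Finset

/-- The product `∏_{j ∈ s} P j` of a family of pairwise commuting endomorphisms. -/
def prodOver {R : Type*} [Monoid R] {n : ℕ} (P : Fin n → R)
    (hP : ∀ i j, Commute (P i) (P j)) (s : Finset (Fin n)) : R :=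
  s.noncommProd P fun a _ b _ _ => hP a b

/-- If commuting `P₀,…,P_ℓ ∈ End(V)` admit a decomposition
`id_V = Σ_i Q_i P^i` and `P = P₀⋯P_ℓ`, then for any `f ∈ V`: `f ∈ range(P)` iff
`f ∈ range(P_i)` for every `i`; in particular `range(P) = ∩_i range(P_i)`. -/
theorem statement5 {F V : Type*} [Field F] [AddCommGroup V] [Module F V]
    (ℓ : ℕ) (P Q : Fin (ℓ + 1) → Module.End F V)
    (hP : ∀ i j, Commute (P i) (P j))
    (hQP : ∀ i j, Commute (Q i) (P j))
    (hid : ∑ i : Fin (ℓ + 1), Q i * prodOver P hP (Finset.univ.erase i) = 1) :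
    (∀ f : V, f ∈ LinearMap.range (prodOver P hP Finset.univ) ↔
      ∀ i : Fin (ℓ + 1), f ∈ LinearMap.range (P i)) ∧
    LinearMap.range (prodOver P hP Finset.univ) =
      ⨅ i : Fin (ℓ + 1), LinearMap.range (P i) := by
  have hsplit : ∀ i, prodOver P hP Finset.univ = P i * prodOver P hP (Finset.univ.erase i) := by
    intro i
    have h1 : (Finset.univ : Finset (Fin (ℓ + 1))) = insert i (Finset.univ.erase i) :=
      (Finset.insert_erase (Finset.mem_univ i)).symm
    exact (Finset.mul_noncommProd_erase _ (Finset.mem_univ i) P _).symm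
  have hQcomm : ∀ i, Commute (Q i) (prodOver P hP Finset.univ) := fun i =>
    Finset.noncommProd_commute _ _ _ _ fun j _ => hQP i j
  have main : ∀ f : V, f ∈ LinearMap.range (prodOver P hP Finset.univ) ↔
      ∀ i : Fin (ℓ + 1), f ∈ LinearMap.range (P i) := by
    intro f
    constructor
    · rintro ⟨g, rfl⟩ i
      exact ⟨prodOver P hP (Finset.univ.erase i) g, by rw [hsplit i]; rfl⟩
    · intro h
      choose g hg using h
      refine ⟨∑ i, Q i (g i), ?_⟩
      have : (prodOver P hP Finset.univ) (∑ i, Q i (g i))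
          = ∑ i, (Q i * prodOver P hP (Finset.univ.erase i)) f := by
        rw [map_sum]
        refine Finset.sum_congr rfl fun i _ => ?_
        have := (hQcomm i).eq
        calc (prodOver P hP Finset.univ) (Q i (g i))
            = (prodOver P hP Finset.univ * Q i) (g i) := rfl
          _ = (Q i * prodOver P hP Finset.univ) (g i) := by rw [(hQcomm i).eq]
          _ = (Q i * (P i * prodOver P hP (Finset.univ.erase i))) (g i) := by rw [hsplit i]
          _ = (Q i * (prodOver P hP (Finset.univ.erase i) * P i)) (g i) := by
              have h2 : P i * prodOver P hP (Finset.univ.erase i)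
                  = prodOver P hP (Finset.univ.erase i) * P i :=
                (Finset.noncommProd_commute _ _ _ (P i) fun j _ => hP i j).eq
              rw [h2]
          _ = (Q i * prodOver P hP (Finset.univ.erase i)) (P i (g i)) := rfl
          _ = (Q i * prodOver P hP (Finset.univ.erase i)) f := by rw [hg i]
      rw [this, ← LinearMap.sum_apply, hid]
      rfl
  refine ⟨main, ?_⟩
  ext f
  simp [main f, Submodule.mem_iInf]
end

section
/- Under the α-decomposition hypotheses, suppose additionally that the sets in α are pairwise disjoint: I ∩ J = ∅ for all I ≠ J in α. Then for fixed f ∈ V, the map F(u) = (P^J u)_{J∈α} from {u : Pu = f} to {(u_J) : P_J u_J = f for all J ∈ α} is a bijection with inverse B((u_J)) = Σ_J Q_J u_J; in particular F ∘ B is the identity on the solution set of the system P_J u_J = f. -/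
open Finset

/-- Given an `α`-decomposition `id_V = Σ_{J∈α} Q_J P^J` of
`P = P₀⋯P_ℓ` where the sets in `α` are pairwise disjoint, and a fixed `f ∈ V`,
the map `F(u) = (P^J u)_{J∈α}` from `{u : Pu = f}` to
`{(u_J) : P_J u_J = f ∀ J ∈ α}` is a bijection with inverse
`B((u_J)) = Σ_J Q_J u_J`; in particular `F ∘ B` is the identity on the solution
set of the system `P_J u_J = f`. -/
theorem statement8 {F V : Type*} [Field F] [AddCommGroup V] [Module F V]
    (ℓ : ℕ) (P : Fin (ℓ + 1) → Module.End F V)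
    (hP : ∀ i j, Commute (P i) (P j))
    (α : Finset (Finset (Fin (ℓ + 1)))) (hne : α.Nonempty)
    (hL : Finset.univ ∉ α)
    (hdisj : ∀ I ∈ α, ∀ J ∈ α, I ≠ J → Disjoint I J)
    (Q : Finset (Fin (ℓ + 1)) → Module.End F V)
    (hQP : ∀ J ∈ α, ∀ i, Commute (Q J) (P i))
    (hid : ∑ J ∈ α, Q J * prodOver P hP (Finset.univ \ J) = 1)
    (f : V) :
    -- F maps solutions of `Pu = f` to solutions of the system and `B ∘ F = id`:
    (∀ u : V, prodOver P hP Finset.univ u = f →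
      (∀ J ∈ α, prodOver P hP J (prodOver P hP (Finset.univ \ J) u) = f) ∧
      ∑ J ∈ α, Q J (prodOver P hP (Finset.univ \ J) u) = u) ∧
    -- B maps solutions of the system to solutions of `Pu = f` and `F ∘ B = id`:
    (∀ u : Finset (Fin (ℓ + 1)) → V, (∀ J ∈ α, prodOver P hP J (u J) = f) →
      prodOver P hP Finset.univ (∑ J ∈ α, Q J (u J)) = f ∧
      ∀ J ∈ α, prodOver P hP (Finset.univ \ J) (∑ I ∈ α, Q I (u I)) = u J) := by
  classical
  set Pr := prodOver P hP with hPrdef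
  have hcommP : ∀ s t : Finset (Fin (ℓ+1)), Commute (Pr s) (Pr t) := fun s t =>
    Finset.noncommProd_commute t P _ _ (fun i _ =>
      (Finset.noncommProd_commute s P _ _ (fun j _ => hP i j)).symm)
  have hcommQ : ∀ J ∈ α, ∀ s, Commute (Q J) (Pr s) := fun J hJ s =>
    Finset.noncommProd_commute s P _ _ (fun i _ => hQP J hJ i)
  have hunion : ∀ s t : Finset (Fin (ℓ+1)), Disjoint s t → Pr (s ∪ t) = Pr s * Pr t :=
    fun s t h => Finset.noncommProd_union_of_disjoint h P _
  have hsplit : ∀ J : Finset (Fin (ℓ+1)), Pr Finset.univ = Pr J * Pr (Finset.univ \ J) := by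
    intro J
    rw [← hunion J _ (Finset.disjoint_sdiff), Finset.union_sdiff_of_subset (Finset.subset_univ J)]
  -- key: for I ≠ J disjoint, Pr (univ \ J) = Pr (univ \ (I ∪ J)) * Pr I
  have hkey : ∀ I J : Finset (Fin (ℓ+1)), Disjoint I J →
      Pr (Finset.univ \ J) = Pr (Finset.univ \ (I ∪ J)) * Pr I := by
    intro I J h
    rw [← hunion _ I (Finset.disjoint_left.mpr
      (fun a ha hI => (Finset.mem_sdiff.mp ha).2 (Finset.mem_union_left _ hI)))]
    congr 1
    ext x
    simp only [Finset.mem_union, Finset.mem_sdiff, Finset.mem_univ, true_and]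
    by_cases hx : x ∈ I
    · simp [hx, Finset.disjoint_left.mp h hx]
    · simp [hx]
  constructor
  · intro u hu
    constructor
    · intro J hJ
      rw [← Module.End.mul_apply, ← hsplit J, hu]
    · have := congrArg (fun T : Module.End F V => T u) hid
      simpa [Module.End.mul_apply] using this
  · intro u hu
    constructor
    · rw [map_sum]
      have : ∀ J ∈ α, Pr Finset.univ (Q J (u J)) = Q J (Pr (Finset.univ \ J) f) := by
        intro J hJ
        have e : Pr Finset.univ * Q J = Q J * Pr (Finset.univ \ J) * Pr J := by
          rw [← (hcommQ J hJ Finset.univ).eq, hsplit J, (hcommP J _).eq, mul_assoc]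
        calc Pr Finset.univ (Q J (u J)) = (Q J * Pr (Finset.univ \ J) * Pr J) (u J) := by
              rw [← Module.End.mul_apply, e]
          _ = Q J (Pr (Finset.univ \ J) f) := by simp [Module.End.mul_apply, hu J hJ]
      rw [Finset.sum_congr rfl this]
      have := congrArg (fun T : Module.End F V => T f) hid
      simpa [Module.End.mul_apply] using this
    · intro J hJ
      rw [map_sum]
      have h1 : ∀ I ∈ α, Q I (Pr (Finset.univ \ I) (u J)) = Pr (Finset.univ \ J) (Q I (u I)) := by
        intro I hI
        by_cases he : I = J
        · subst he
          have := congrArg (fun T : Module.End F V => T (u I)) (hcommQ I hI (Finset.univ \ I)).eq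
          simpa [Module.End.mul_apply] using this
        · have hd := hdisj I hI J hJ he
          have e1 : Pr (Finset.univ \ I) (u J) = Pr (Finset.univ \ (J ∪ I)) f := by
            have := congrArg (fun T : Module.End F V => T (u J)) (hkey J I hd.symm)
            simpa [Module.End.mul_apply, hu J hJ] using this
          have e2 : Pr (Finset.univ \ J) (u I) = Pr (Finset.univ \ (I ∪ J)) f := by
            have := congrArg (fun T : Module.End F V => T (u I)) (hkey I J hd)
            simpa [Module.End.mul_apply, hu I hI] using this
          have e3 := congrArg (fun T : Module.End F V => T (u I)) (hcommQ I hI (Finset.univ \ J)).eq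
          simp only [Module.End.mul_apply] at e3
          rw [e1, Finset.union_comm J I, ← e2, e3]
      calc ∑ I ∈ α, Pr (Finset.univ \ J) (Q I (u I))
          = ∑ I ∈ α, Q I (Pr (Finset.univ \ I) (u J)) := by
            exact (Finset.sum_congr rfl h1).symm
        _ = u J := by
            have := congrArg (fun T : Module.End F V => T (u J)) hid
            simpa [Module.End.mul_apply] using this
end

section
/- A composition P = P₀⋯P_ℓ of commuting endomorphisms of V admits an α-decomposition if and only if it admits a dual α^u-decomposition, where α^u = {J ⊆ L : ∀ I ∈ α, J∖I ≠ ∅}. -/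
open Finset

/-- `P = P₀⋯P_ℓ` is an `α`-decomposition. -/
def IsAlphaDecomp {F V : Type*} [Field F] [AddCommGroup V] [Module F V]
    {ℓ : ℕ} (P : Fin (ℓ + 1) → Module.End F V)
    (hP : ∀ i j, Commute (P i) (P j))
    (α : Finset (Finset (Fin (ℓ + 1)))) : Prop :=
  ∃ Q : Finset (Fin (ℓ + 1)) → Module.End F V,
    (∀ J ∈ α, ∀ i, Commute (Q J) (P i)) ∧
    ∑ J ∈ α, Q J * prodOver P hP (Finset.univ \ J) = 1

/-- `P = P₀⋯P_ℓ` is a dual `β`-decomposition: for every `J ∈ β` there are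
`Q_{J,j}` (`j ∈ J`) commuting with all `P_i` with `id_V = Σ_{j∈J} Q_{J,j} P_j`. -/
def IsDualDecomp {F V : Type*} [Field F] [AddCommGroup V] [Module F V]
    {ℓ : ℕ} (P : Fin (ℓ + 1) → Module.End F V)
    (β : Finset (Finset (Fin (ℓ + 1)))) : Prop :=
  ∀ J ∈ β, ∃ Q : Fin (ℓ + 1) → Module.End F V,
    (∀ j ∈ J, ∀ i, Commute (Q j) (P i)) ∧
    ∑ j ∈ J, Q j * P j = 1

section Aux

lemma erase_sum_general {M : Type*} [AddCommMonoid M] {β : Type*} [DecidableEq β]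
    (a : β) (s : Finset β) (f : β → M) :
    ∑ x ∈ insert a s, f x = f a + ∑ x ∈ s.erase a, f x := by
  have h : insert a s = insert a (s.erase a) := by
    ext x; simp only [Finset.mem_insert, Finset.mem_erase]; tauto
  rw [h, Finset.sum_insert (Finset.notMem_erase a s)]

variable {R : Type*} [Ring R] {n : ℕ} (P : Fin n → R) (hP : ∀ i j, Commute (P i) (P j))

lemma commute_prodOver {x : R} (hx : ∀ i, Commute x (P i)) (S : Finset (Fin n)) :
    Commute x (prodOver P hP S) :=
  Finset.noncommProd_commute _ _ _ _ (fun i _ => hx i)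

lemma prodOver_empty : prodOver P hP (∅ : Finset (Fin n)) = 1 :=
  Finset.noncommProd_empty _ _

lemma prodOver_insert {j : Fin n} {S : Finset (Fin n)} (hj : j ∉ S) :
    prodOver P hP (insert j S) = prodOver P hP S * P j := by
  rw [prodOver]
  exact (Finset.noncommProd_insert_of_notMem _ _ _ _ hj).trans
    (commute_prodOver P hP (fun i => hP j i) S).eq

lemma mul_mul_swap {y g : R} (x : R) (h : Commute y g) : x * y * g = x * g * y := by
  rw [mul_assoc, h.eq, ← mul_assoc]

/-- `1` can be written as `Σ_{T ∈ 𝒢} c_T Π_{t∈T} P_t + Σ_{j ∈ E} d_j P_j` with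
coefficients commuting with all `P i`. -/
def Gd (𝒢 : Finset (Finset (Fin n))) (E : Finset (Fin n)) : Prop :=
  ∃ (c : Finset (Fin n) → R) (d : Fin n → R),
    (∀ T i, Commute (c T) (P i)) ∧ (∀ j i, Commute (d j) (P i)) ∧
    (∑ T ∈ 𝒢, c T * prodOver P hP T) + ∑ j ∈ E, d j * P j = 1

lemma gd_of_hits (𝒢 : Finset (Finset (Fin n))) :
    ∀ E : Finset (Fin n),
      (∀ J : Finset (Fin n), (∀ T ∈ 𝒢, (J ∩ T).Nonempty) →
        ∃ d : Fin n → R, (∀ j i, Commute (d j) (P i)) ∧ ∑ j ∈ J ∪ E, d j * P j = 1) →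
      Gd P hP 𝒢 E := by
  induction 𝒢 using Finset.strongInduction with
  | _ 𝒢 ih =>
  intro E H
  rcases Finset.eq_empty_or_nonempty 𝒢 with rfl | ⟨T, hT⟩
  · obtain ⟨d, hd, hsum⟩ := H ∅ (by simp)
    exact ⟨fun _ => 0, d, by simp, hd, by simpa using hsum⟩
  have inner : ∀ S : Finset (Fin n), S ⊆ T → Gd P hP (insert S (𝒢.erase T)) E := by
    intro S
    induction S using Finset.induction_on with
    | empty =>
      intro _
      refine ⟨fun T' => if T' = (∅ : Finset (Fin n)) then 1 else 0, fun _ => 0,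
        ?_, by simp, ?_⟩
      · intro T' i
        by_cases h : T' = (∅ : Finset (Fin n)) <;> simp [h]
      · simp only [ite_mul, one_mul, zero_mul, Finset.sum_ite_eq', Finset.mem_insert,
          Finset.sum_const_zero, add_zero]
        simp [prodOver_empty P hP]
    | @insert j S hjS ihS =>
      intro hsub
      have hjT : j ∈ T := hsub (Finset.mem_insert_self j S)
      have hST : S ⊆ T := (Finset.subset_insert j S).trans hsub
      obtain ⟨c, d, hc, hd, eq1⟩ := ihS hST
      have H' : ∀ J : Finset (Fin n), (∀ T' ∈ 𝒢.erase T, (J ∩ T').Nonempty) →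
          ∃ d : Fin n → R, (∀ j' i, Commute (d j') (P i)) ∧
            ∑ j' ∈ J ∪ insert j E, d j' * P j' = 1 := by
        intro J hJ
        have hhit : ∀ T' ∈ 𝒢, ((insert j J) ∩ T').Nonempty := by
          intro T' hT'
          by_cases hTT : T' = T
          · exact ⟨j, Finset.mem_inter.mpr ⟨Finset.mem_insert_self j J, hTT ▸ hjT⟩⟩
          · obtain ⟨x, hx⟩ := hJ T' (Finset.mem_erase.mpr ⟨hTT, hT'⟩)
            rw [Finset.mem_inter] at hx
            exact ⟨x, Finset.mem_inter.mpr ⟨Finset.mem_insert_of_mem hx.1, hx.2⟩⟩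
        obtain ⟨d', hd', hs⟩ := H (insert j J) hhit
        refine ⟨d', hd', ?_⟩
        have hset : insert j J ∪ E = J ∪ insert j E := by
          ext x; simp only [Finset.mem_union, Finset.mem_insert]; tauto
        rwa [hset] at hs
      obtain ⟨c', d', hc', hd', eq2⟩ :=
        ih (𝒢.erase T) (Finset.erase_ssubset hT) (insert j E) H'
      refine ⟨fun T' => (if T' = insert j S then c S * d' j else 0)
          + (if T' ∈ (𝒢.erase T).erase S then c T' * d' j * P j else 0)
          + (if T' ∈ 𝒢.erase T then c' T' else 0),
        fun j'' => d j'' * d' j * P j + (if j'' ≠ j then d' j'' else 0),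
        ?_, ?_, ?_⟩
      · intro T' i
        refine Commute.add_left (Commute.add_left ?_ ?_) ?_
        · split
          · exact (hc S i).mul_left (hd' j i)
          · exact Commute.zero_left _
        · split
          · exact ((hc T' i).mul_left (hd' j i)).mul_left (hP j i)
          · exact Commute.zero_left _
        · split
          · exact hc' T' i
          · exact Commute.zero_left _
      · intro j'' i
        refine Commute.add_left (((hd j'' i).mul_left (hd' j i)).mul_left (hP j i)) ?_
        split
        · exact hd' j'' i
        · exact Commute.zero_left _
      · -- the main computation
        have hbS : Commute (d' j) (prodOver P hP S) :=
          commute_prodOver P hP (fun i => hd' j i) S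
        have hswap : ∀ (x : R) (T' : Finset (Fin n)),
            x * d' j * P j * prodOver P hP T' = x * prodOver P hP T' * (d' j * P j) := by
          intro x T'
          have h1 : Commute (d' j * P j) (prodOver P hP T') :=
            commute_prodOver P hP (fun i => (hd' j i).mul_left (hP j i)) T'
          rw [mul_assoc x (d' j) (P j)]
          exact mul_mul_swap x h1
        have hswapP : ∀ (x : R) (j'' : Fin n),
            x * d' j * P j * P j'' = x * P j'' * (d' j * P j) := by
          intro x j''
          have h1 : Commute (d' j * P j) (P j'') := (hd' j j'').mul_left (hP j j'')
          rw [mul_assoc x (d' j) (P j)]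
          exact mul_mul_swap x h1
        have hX1 : c S * d' j * prodOver P hP (insert j S)
            = c S * prodOver P hP S * (d' j * P j) := by
          rw [prodOver_insert P hP hjS, ← mul_assoc, mul_mul_swap (c S) hbS, mul_assoc]
        -- rewrite eq1 and eq2 into split forms
        rw [erase_sum_general S (𝒢.erase T) (fun T' => c T' * prodOver P hP T')] at eq1
        rw [erase_sum_general j E (fun j'' => d' j'' * P j'')] at eq2
        -- now massage the goal
        simp only [add_mul, Finset.sum_add_distrib, ite_mul, zero_mul]
        rw [Finset.sum_ite_eq', if_pos (Finset.mem_insert_self _ _)]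
        rw [Finset.sum_ite_mem, Finset.inter_eq_right.mpr
          ((Finset.erase_subset _ _).trans (Finset.subset_insert _ _))]
        rw [Finset.sum_ite_mem, Finset.inter_eq_right.mpr (Finset.subset_insert _ _)]
        have hS5 : ∑ j'' ∈ E, (if j'' ≠ j then d' j'' * P j'' else 0)
            = ∑ j'' ∈ E.erase j, d' j'' * P j'' := by
          rw [← Finset.sum_filter]
          congr 1
          ext x; simp [Finset.mem_erase, and_comm]
        rw [hS5, hX1]
        simp only [hswap, hswapP]
        rw [← Finset.sum_mul, ← Finset.sum_mul]
        -- goal should now be an additive/multiplicative rearrangement of eq1 * (d' j * P j) + eq2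
        set A1 := c S * prodOver P hP S with hA1
        set A2 := ∑ T' ∈ (𝒢.erase T).erase S, c T' * prodOver P hP T' with hA2
        set A3 := ∑ T' ∈ 𝒢.erase T, c' T' * prodOver P hP T' with hA3
        set A4 := ∑ j'' ∈ E, d j'' * P j'' with hA4
        set A5 := ∑ j'' ∈ E.erase j, d' j'' * P j'' with hA5
        set Y := d' j * P j with hY
        have key : (A1 + A2 + A4) * Y + (A3 + (Y + A5)) - Y = 1 := by
          rw [eq1, eq2]; noncomm_ring
        rw [← key]; noncomm_ring
  have := inner T (le_refl T)
  rwa [Finset.insert_erase hT] at this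

end Aux

/-- `P = P₀⋯P_ℓ` admits an `α`-decomposition iff it admits a dual
`α^u`-decomposition, where `α^u = {J ⊆ L : ∀ I ∈ α, J ∖ I ≠ ∅}`. -/
theorem statement12 {F V : Type*} [Field F] [AddCommGroup V] [Module F V]
    (ℓ : ℕ) (P : Fin (ℓ + 1) → Module.End F V)
    (hP : ∀ i j, Commute (P i) (P j))
    (α : Finset (Finset (Fin (ℓ + 1)))) :
    IsAlphaDecomp P hP α ↔
      IsDualDecomp P
        (Finset.univ.filter (fun J => ∀ I ∈ α, (J \ I).Nonempty)) := by
  constructor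
  · rintro ⟨Q, hQc, hQs⟩ J hJ
    have hJ' : ∀ I ∈ α, (J \ I).Nonempty := (Finset.mem_filter.mp hJ).2
    classical
    set f : Finset (Fin (ℓ + 1)) → Fin (ℓ + 1) :=
      fun I => if h : (J \ I).Nonempty then h.choose else ⟨0, Nat.succ_pos ℓ⟩ with hf
    have hfmem : ∀ I ∈ α, f I ∈ J \ I := by
      intro I hI
      simp only [hf, dif_pos (hJ' I hI)]
      exact (hJ' I hI).choose_spec
    refine ⟨fun j => ∑ I ∈ α.filter (fun I => f I = j),
        Q I * prodOver P hP ((Finset.univ \ I).erase (f I)), ?_, ?_⟩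
    · intro j _ i
      refine Commute.sum_left _ _ _ ?_
      intro I hI
      exact (hQc I (Finset.mem_of_mem_filter I hI) i).mul_left
        ((commute_prodOver P hP (fun k => hP i k) _).symm)
    · have step : ∀ j ∈ J, (∑ I ∈ α.filter (fun I => f I = j),
          Q I * prodOver P hP ((Finset.univ \ I).erase (f I))) * P j
          = ∑ I ∈ α.filter (fun I => f I = j), Q I * prodOver P hP (Finset.univ \ I) := by
        intro j _
        rw [Finset.sum_mul]
        refine Finset.sum_congr rfl ?_
        intro I hI
        obtain ⟨hIα, hfI⟩ := Finset.mem_filter.mp hI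
        have hmem : f I ∈ Finset.univ \ I := by
          have := hfmem I hIα
          rw [Finset.mem_sdiff] at this ⊢
          exact ⟨Finset.mem_univ _, this.2⟩
        have hins : insert (f I) ((Finset.univ \ I).erase (f I)) = Finset.univ \ I :=
          Finset.insert_erase hmem
        rw [← hfI]
        conv_rhs => rw [← hins, prodOver_insert P hP (Finset.notMem_erase _ _)]
        rw [mul_assoc]
      rw [Finset.sum_congr rfl step,
        Finset.sum_fiberwise_of_maps_to (fun I hI => (Finset.mem_sdiff.mp (hfmem I hI)).1)]
      exact hQs
  · intro hdual
    classical
    have hmain := gd_of_hits P hP (α.image (fun I => Finset.univ \ I)) ∅ ?_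
    · obtain ⟨c, d, hc, _, hsum⟩ := hmain
      refine ⟨fun I => c (Finset.univ \ I), fun I _ i => hc _ i, ?_⟩
      have hinj : ∀ x ∈ α, ∀ y ∈ α, Finset.univ \ x = Finset.univ \ y → x = y := by
        intro x _ y _ h
        have := congrArg (fun s => Finset.univ \ s) h
        simpa [Finset.sdiff_sdiff_self_left] using this
      rw [Finset.sum_image hinj] at hsum
      simpa using hsum
    · intro J hJhit
      have hJmem : J ∈ Finset.univ.filter (fun J => ∀ I ∈ α, (J \ I).Nonempty) := by
        rw [Finset.mem_filter]
        refine ⟨Finset.mem_univ _, fun I hI => ?_⟩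
        have := hJhit (Finset.univ \ I) (Finset.mem_image_of_mem _ hI)
        have heq : J ∩ (Finset.univ \ I) = J \ I := by
          ext x; simp
        rwa [heq] at this
      obtain ⟨Q, hQc, hQs⟩ := hdual J hJmem
      refine ⟨fun j => if h : j ∈ J then Q j else 0, ?_, ?_⟩
      · intro j i
        by_cases h : j ∈ J
        · simpa [h] using hQc j h i
        · simp [h]
      · rw [Finset.union_empty]
        rw [← hQs]
        refine Finset.sum_congr rfl ?_
        intro j hj
        simp [hj]
end

section
/- Let P = P₀⋯P_ℓ be a composition of commuting endomorphisms of V with decomposition id_V = Σ_i Q_i P^i ([Q_i,P_j]=0, P^i = ∏_{j≠i}P_j). If S ∈ End(V) is a formal symmetry of P (i.e. P S = S' P for some S' ∈ End(V)) and Pr_i := Q_i P^i, then for each pair i, j the operator S_{ij} := Pr_i S Pr_j satisfies P_i S_{ij} = T_{ij} P_j for some T_{ij} ∈ End(V); in particular S_{ij} maps ker(P_j) into ker(P_i). -/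
open Finset

/-- Let `P = P₀⋯P_ℓ` with decomposition `id_V = Σ_i Q_i P^i`.
If `S` is a formal symmetry of `P` (`P S = S' P` for some `S'`) and
`Pr_i := Q_i P^i`, then for each `i, j` the operator `S_{ij} := Pr_i S Pr_j`
satisfies `P_i S_{ij} = T_{ij} P_j` for some `T_{ij}`; in particular `S_{ij}`
maps `ker(P_j)` into `ker(P_i)`. -/
theorem statement17 {F V : Type*} [Field F] [AddCommGroup V] [Module F V]
    (ℓ : ℕ) (P Q : Fin (ℓ + 1) → Module.End F V)
    (hP : ∀ i j, Commute (P i) (P j))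
    (hQP : ∀ i j, Commute (Q i) (P j))
    (hid : ∑ i : Fin (ℓ + 1), Q i * prodOver P hP (Finset.univ.erase i) = 1)
    (S S' : Module.End F V)
    (hsym : prodOver P hP Finset.univ * S = S' * prodOver P hP Finset.univ) :
    ∀ i j : Fin (ℓ + 1),
      (∃ T : Module.End F V,
        P i * ((Q i * prodOver P hP (Finset.univ.erase i)) * S *
          (Q j * prodOver P hP (Finset.univ.erase j))) = T * P j) ∧
      ∀ u ∈ LinearMap.ker (P j),
        ((Q i * prodOver P hP (Finset.univ.erase i)) * S *
          (Q j * prodOver P hP (Finset.univ.erase j))) u ∈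
            LinearMap.ker (P i) := by
  have hPprod : ∀ k s, Commute (P k) (prodOver P hP s) := fun k s =>
    Finset.noncommProd_commute _ _ _ _ fun x _ => hP k x
  have hQprod : ∀ k s, Commute (Q k) (prodOver P hP s) := fun k s =>
    Finset.noncommProd_commute _ _ _ _ fun x _ => hQP k x
  have key : ∀ i, P i * prodOver P hP (Finset.univ.erase i) = prodOver P hP Finset.univ := fun i =>
    Finset.mul_noncommProd_erase Finset.univ (Finset.mem_univ i) P _
  intro i j
  have hT : P i * ((Q i * prodOver P hP (Finset.univ.erase i)) * S *
      (Q j * prodOver P hP (Finset.univ.erase j))) =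
      (Q i * S' * Q j * prodOver P hP (Finset.univ.erase j) *
        prodOver P hP (Finset.univ.erase j)) * P j := by
    calc P i * ((Q i * prodOver P hP (Finset.univ.erase i)) * S *
        (Q j * prodOver P hP (Finset.univ.erase j)))
        = Q i * (P i * prodOver P hP (Finset.univ.erase i) * S) *
          (Q j * prodOver P hP (Finset.univ.erase j)) := by
          simp only [← mul_assoc]; rw [(hQP i i).eq]
      _ = Q i * (S' * prodOver P hP Finset.univ) *
          (Q j * prodOver P hP (Finset.univ.erase j)) := by rw [key i, hsym]
      _ = Q i * S' * (prodOver P hP Finset.univ * Q j) *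
          prodOver P hP (Finset.univ.erase j) := by simp only [mul_assoc]
      _ = _ := by
          rw [← (hQprod j Finset.univ).eq, ← key j]
          have h2 : P j * (prodOver P hP (Finset.univ.erase j) *
              prodOver P hP (Finset.univ.erase j)) =
              prodOver P hP (Finset.univ.erase j) *
                (prodOver P hP (Finset.univ.erase j) * P j) := by
            rw [((hPprod j _).mul_right (hPprod j _)).eq, mul_assoc]
          simp only [mul_assoc, h2]
  refine ⟨⟨_, hT⟩, fun u hu => ?_⟩
  rw [LinearMap.mem_ker] at hu ⊢
  have := congrArg (fun f : Module.End F V => f u) hT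
  simp only [Module.End.mul_apply] at this ⊢
  rw [this, hu]; simp only [map_zero]
end

section
/- Under the same decomposition hypotheses, if for a pair i ≠ j the operator S_{ij} ∈ End(V) is a generalised formal symmetry, i.e. P_i S_{ij} = S'_{ij} P_j for some S'_{ij}, and S'_{ij} commutes with the P_k and Q_k as needed, then S_{ij} Pr_j is a formal symmetry of P = P₀⋯P_ℓ: explicitly P (S_{ij} Pr_j) = (P^i S'_{ij} Q_j) P. -/
open Finset

lemma prodOver_univ_eq {R : Type*} [Monoid R] {n : ℕ} (P : Fin n → R)
    (hP : ∀ i j, Commute (P i) (P j)) (i : Fin n) :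
    prodOver P hP Finset.univ = P i * prodOver P hP (Finset.univ.erase i) := by
  unfold prodOver
  rw [Finset.noncommProd_congr (Finset.insert_erase (Finset.mem_univ i)).symm
    (fun x _ => rfl) (fun a _ b _ _ => hP a b)]
  exact Finset.noncommProd_insert_of_notMem _ _ _ _ (Finset.notMem_erase i _)

/-- Let `P = P₀⋯P_ℓ` with decomposition `id_V = Σ_k Q_k P^k`.
If `i ≠ j` and `S_{ij}` is a generalised formal symmetry,
`P_i S_{ij} = S'_{ij} P_j` with `S'_{ij}` commuting with all `P_k`, then
`S_{ij} Pr_j` (with `Pr_j = Q_j P^j`) is a formal symmetry of `P`: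
`P (S_{ij} Pr_j) = (P^i S'_{ij} Q_j) P`. -/
theorem statement18 {F V : Type*} [Field F] [AddCommGroup V] [Module F V]
    (ℓ : ℕ) (P Q : Fin (ℓ + 1) → Module.End F V)
    (hP : ∀ i j, Commute (P i) (P j))
    (hQP : ∀ i j, Commute (Q i) (P j))
    (hid : ∑ k : Fin (ℓ + 1), Q k * prodOver P hP (Finset.univ.erase k) = 1)
    (i j : Fin (ℓ + 1)) (hij : i ≠ j)
    (Sij S'ij : Module.End F V)
    (hgen : P i * Sij = S'ij * P j)
    (hS' : ∀ k, Commute S'ij (P k)) :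
    prodOver P hP Finset.univ * (Sij * (Q j * prodOver P hP (Finset.univ.erase j))) =
      (prodOver P hP (Finset.univ.erase i) * S'ij * Q j) *
        prodOver P hP Finset.univ := by
  have h1 : prodOver P hP Finset.univ = P i * prodOver P hP (Finset.univ.erase i) :=
    prodOver_univ_eq P hP i
  have h2 : prodOver P hP Finset.univ = P j * prodOver P hP (Finset.univ.erase j) :=
    prodOver_univ_eq P hP j
  have hPi : Commute (P i) (prodOver P hP (Finset.univ.erase i)) :=
    Finset.noncommProd_commute _ _ _ _ fun x _ => hP i x
  rw [h1, hPi.eq]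
  simp only [mul_assoc]
  rw [← mul_assoc (P i) Sij, hgen]
  simp only [mul_assoc]
  rw [← mul_assoc (P j) (Q j), ← (hQP j j).eq]
  simp only [mul_assoc]
  rw [← h2, ← hPi.eq, ← h1]
end

section
/- Let P = P₀⋯P_ℓ and R⁽¹⁾,...,R⁽ᵏ⁾ be endomorphisms of V with all P_i and R⁽ʲ⁾ mutually commuting, and suppose id_V = Σ_{i=0}^ℓ Q_i P^i + Σ_{j=1}^k S_j R⁽ʲ⁾ where all Q_i, S_j commute with all P_m and R⁽ᵖ⁾. Fix f, g¹,...,gᵏ ∈ V satisfying R⁽ʲ⁾f = P gʲ and R⁽ʲ⁾gⁱ = R⁽ⁱ⁾gʲ. Then u ∈ V solves the system {P u = f, R⁽ʲ⁾u = gʲ for all j} if and only if (u₀,...,u_ℓ) := (P⁰u,...,P^ℓ u) solves the system {P_i u_i = f and R⁽ʲ⁾u_i = P^i gʲ for all i, j}, and the map u ↦ (P^i u)_i is a bijection between the two solution sets with inverse (u_i)_i ↦ Σ_i Q_i u_i + Σ_j S_j gʲ. -/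
open Finset

/-- Theorem on systems: Let `P = P₀⋯P_ℓ` and `R⁽¹⁾,…,R⁽ᵏ⁾` be
mutually commuting endomorphisms of `V` with
`id_V = Σ_i Q_i P^i + Σ_j S_j R⁽ʲ⁾` (all `Q_i, S_j` commuting with all `P_m, R⁽ᵖ⁾`),
and let `f, g¹,…,gᵏ` satisfy the integrability conditions `R⁽ʲ⁾f = P gʲ` and
`R⁽ʲ⁾gⁱ = R⁽ⁱ⁾gʲ`.  Then `u ↦ (P^i u)_i` maps solutions of the system
`{P u = f, R⁽ʲ⁾u = gʲ}` to solutions of the system of systems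
`{P_i u_i = f, R⁽ʲ⁾u_i = P^i gʲ}`, the map `(u_i)_i ↦ Σ_i Q_i u_i + Σ_j S_j gʲ`
maps back, and the two maps are mutually inverse bijections between the two
solution sets. -/
theorem statement19 {F V : Type*} [Field F] [AddCommGroup V] [Module F V]
    (ℓ k : ℕ) (P : Fin (ℓ + 1) → Module.End F V)
    (R : Fin k → Module.End F V)
    (hP : ∀ i j, Commute (P i) (P j))
    (hPR : ∀ i j, Commute (P i) (R j))
    (hR : ∀ i j, Commute (R i) (R j))
    (Q : Fin (ℓ + 1) → Module.End F V) (S : Fin k → Module.End F V)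
    (hQP : ∀ i m, Commute (Q i) (P m)) (hQR : ∀ i p, Commute (Q i) (R p))
    (hSP : ∀ p m, Commute (S p) (P m)) (hSR : ∀ p q, Commute (S p) (R q))
    (hid : ∑ i : Fin (ℓ + 1), Q i * prodOver P hP (Finset.univ.erase i) +
        ∑ j : Fin k, S j * R j = 1)
    (f : V) (g : Fin k → V)
    (hint1 : ∀ j, R j f = prodOver P hP Finset.univ (g j))
    (hint2 : ∀ i j, R j (g i) = R i (g j)) :
    -- (1) `F` maps solutions of the original system to solutions of the lower systems:
    (∀ u : V, prodOver P hP Finset.univ u = f → (∀ j, R j u = g j) →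
      ∀ i, P i (prodOver P hP (Finset.univ.erase i) u) = f ∧
        ∀ j, R j (prodOver P hP (Finset.univ.erase i) u) =
          prodOver P hP (Finset.univ.erase i) (g j)) ∧
    -- (2) `B` maps solutions of the lower systems to solutions of the original system:
    (∀ w : Fin (ℓ + 1) → V,
      (∀ i, P i (w i) = f ∧ ∀ j, R j (w i) =
        prodOver P hP (Finset.univ.erase i) (g j)) →
      prodOver P hP Finset.univ
          (∑ i, Q i (w i) + ∑ j, S j (g j)) = f ∧
        ∀ j, R j (∑ i, Q i (w i) + ∑ j, S j (g j)) = g j) ∧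
    -- (3) `B ∘ F = id` on solutions of the original system:
    (∀ u : V, prodOver P hP Finset.univ u = f → (∀ j, R j u = g j) →
      ∑ i, Q i (prodOver P hP (Finset.univ.erase i) u) + ∑ j, S j (g j) = u) ∧
    -- (4) `F ∘ B = id` on solutions of the lower systems:
    (∀ w : Fin (ℓ + 1) → V,
      (∀ i, P i (w i) = f ∧ ∀ j, R j (w i) =
        prodOver P hP (Finset.univ.erase i) (g j)) →
      ∀ r, prodOver P hP (Finset.univ.erase r)
          (∑ i, Q i (w i) + ∑ j, S j (g j)) = w r) := by
  classical
  -- commuting endomorphisms commute on elements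
  have comm_ap : ∀ (A B : Module.End F V), Commute A B → ∀ v, A (B v) = B (A v) :=
    fun A B h v => LinearMap.congr_fun h v
  -- factorizations of products
  have hsplit : ∀ (s : Finset (Fin (ℓ + 1))) (i : Fin (ℓ + 1)), i ∈ s → ∀ v : V,
      prodOver P hP s v = P i (prodOver P hP (s.erase i) v) := by
    intro s i hi v
    exact (LinearMap.congr_fun
      (Finset.mul_noncommProd_erase s hi P (fun a _ b _ _ => hP a b)) v).symm
  have hsplit' : ∀ (s : Finset (Fin (ℓ + 1))) (i : Fin (ℓ + 1)), i ∈ s → ∀ v : V,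
      prodOver P hP s v = prodOver P hP (s.erase i) (P i v) := by
    intro s i hi v
    exact (LinearMap.congr_fun
      (Finset.noncommProd_erase_mul s hi P (fun a _ b _ _ => hP a b)) v).symm
  -- products commute with Q, S, R on elements
  have hQprod : ∀ i (s : Finset (Fin (ℓ + 1))) (v : V),
      Q i (prodOver P hP s v) = prodOver P hP s (Q i v) := fun i s v =>
    comm_ap _ _ (Finset.noncommProd_commute s P _ (Q i) fun x _ => hQP i x) v
  have hSprod : ∀ p (s : Finset (Fin (ℓ + 1))) (v : V),
      S p (prodOver P hP s v) = prodOver P hP s (S p v) := fun p s v =>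
    comm_ap _ _ (Finset.noncommProd_commute s P _ (S p) fun x _ => hSP p x) v
  have hRprod : ∀ j (s : Finset (Fin (ℓ + 1))) (v : V),
      R j (prodOver P hP s v) = prodOver P hP s (R j v) := fun j s v =>
    comm_ap _ _ (Finset.noncommProd_commute s P _ (R j) fun x _ => (hPR x j).symm) v
  -- the identity applied to an element
  have hid' : ∀ v : V,
      ∑ i, Q i (prodOver P hP (Finset.univ.erase i) v) + ∑ j, S j (R j v) = v := by
    intro v
    have h := LinearMap.congr_fun hid v
    simpa [LinearMap.add_apply, LinearMap.sum_apply, Module.End.mul_apply,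
      Module.End.one_apply] using h
  refine ⟨?_, ?_, ?_, ?_⟩
  · -- (1)
    intro u hu hru i
    constructor
    · rw [← hsplit Finset.univ i (Finset.mem_univ i) u]; exact hu
    · intro j
      rw [hRprod j _ u, hru j]
  · -- (2)
    intro w hw
    constructor
    · rw [map_add, map_sum, map_sum]
      have h1 : ∀ i, prodOver P hP Finset.univ (Q i (w i)) =
          Q i (prodOver P hP (Finset.univ.erase i) f) := by
        intro i
        rw [← hQprod i Finset.univ (w i),
          hsplit' Finset.univ i (Finset.mem_univ i) (w i), (hw i).1,
          hQprod i _ f]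
      have h2 : ∀ j, prodOver P hP Finset.univ (S j (g j)) = S j (R j f) := by
        intro j
        rw [← hSprod j Finset.univ (g j), ← hint1 j]
      calc ∑ i, prodOver P hP Finset.univ (Q i (w i)) +
            ∑ j, prodOver P hP Finset.univ (S j (g j))
          = ∑ i, Q i (prodOver P hP (Finset.univ.erase i) f) + ∑ j, S j (R j f) := by
            rw [Finset.sum_congr rfl fun i _ => h1 i, Finset.sum_congr rfl fun j _ => h2 j]
        _ = f := hid' f
    · intro j
      rw [map_add, map_sum, map_sum]
      have h1 : ∀ i, R j (Q i (w i)) =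
          Q i (prodOver P hP (Finset.univ.erase i) (g j)) := by
        intro i
        rw [← comm_ap _ _ (hQR i j) (w i), (hw i).2 j]
      have h2 : ∀ p, R j (S p (g p)) = S p (R p (g j)) := by
        intro p
        rw [← comm_ap _ _ (hSR p j) (g p), hint2 p j]
      calc ∑ i, R j (Q i (w i)) + ∑ p, R j (S p (g p))
          = ∑ i, Q i (prodOver P hP (Finset.univ.erase i) (g j)) +
              ∑ p, S p (R p (g j)) := by
            rw [Finset.sum_congr rfl fun i _ => h1 i, Finset.sum_congr rfl fun p _ => h2 p]
        _ = g j := hid' (g j)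
  · -- (3)
    intro u hu hru
    have : ∀ j, S j (g j) = S j (R j u) := fun j => by rw [hru j]
    rw [Finset.sum_congr rfl fun j _ => this j]
    exact hid' u
  · -- (4)
    intro w hw r
    rw [map_add, map_sum, map_sum]
    have h1 : ∀ i, prodOver P hP (Finset.univ.erase r) (Q i (w i)) =
        Q i (prodOver P hP (Finset.univ.erase i) (w r)) := by
      intro i
      have key : prodOver P hP (Finset.univ.erase r) (w i) =
          prodOver P hP (Finset.univ.erase i) (w r) := by
        by_cases hir : i = r
        · subst hir; rfl
        · have hi : i ∈ Finset.univ.erase r := by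
            simp [Finset.mem_erase, hir]
          have hr : r ∈ Finset.univ.erase i := by
            simp [Finset.mem_erase, Ne.symm hir]
          rw [hsplit' _ i hi (w i), (hw i).1,
            hsplit' _ r hr (w r), (hw r).1, Finset.erase_right_comm]
      rw [← hQprod i _ (w i), key, hQprod i _ (w r)]
    have h2 : ∀ j, prodOver P hP (Finset.univ.erase r) (S j (g j)) =
        S j (R j (w r)) := by
      intro j
      rw [← hSprod j _ (g j), (hw r).2 j]
    calc ∑ i, prodOver P hP (Finset.univ.erase r) (Q i (w i)) +
          ∑ j, prodOver P hP (Finset.univ.erase r) (S j (g j))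
        = ∑ i, Q i (prodOver P hP (Finset.univ.erase i) (w r)) +
            ∑ j, S j (R j (w r)) := by
          rw [Finset.sum_congr rfl fun i _ => h1 i, Finset.sum_congr rfl fun j _ => h2 j]
      _ = w r := hid' (w r)
end
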